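/- Let Π be a connected small groupoid with a group Γ acting on it, and let x be an object of Π. Then the map Q(Π,Γ)(x,x) → Γ sending (σ,α) to σ is a surjective group homomorphism whose kernel is isomorphic to Π(x,x). In particular there is a short exact sequence 1 → Π(x,x) → Q(Π,Γ,x) → Γ → 1. -/

import Mathlib

open CategoryTheory

/-- An action of a group `Γ` on a groupoid `C` by functors. -/
structure GroupoidAction (Γ : Type*) [Group Γ] (C : Type*) [Groupoid C] where
  act : Γ → C ⥤ C
  act_one : act 1 = Functor.id C
  act_mul : ∀ σ τ : Γ, act (σ * τ) = act τ ⋙ act σ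

variable {Γ : Type*} [Group Γ] {C : Type*} [Groupoid C]

/-- Morphisms of the Grothendieck construction `Q(Π,Γ)`: pairs `(σ, α)` with
`α : σ(x) ⟶ y`. -/
def QHom (A : GroupoidAction Γ C) (x y : C) : Type _ :=
  (σ : Γ) × ((A.act σ).obj x ⟶ y)

/-- The identity morphism of `Q(Π,Γ)`. -/
def Qid (A : GroupoidAction Γ C) (x : C) : QHom A x x :=
  ⟨1, eqToHom (by rw [A.act_one]; rfl)⟩

/-- Composition in `Q(Π,Γ)`: `(σ,α) ∘ (τ,β) = (στ, α ∘ σ(β))` (the morphism `g = (τ,β)`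
is applied first). -/
def Qcomp {A : GroupoidAction Γ C} {x y z : C} (f : QHom A y z) (g : QHom A x y) :
    QHom A x z :=
  ⟨f.1 * g.1, eqToHom (by rw [A.act_mul]; rfl) ≫ (A.act f.1).map g.2 ≫ f.2⟩

/-- The embedding of `Π(x,x)` into `Q(Π,Γ,x)` as the pairs `(1, α)`. -/
def Qof (A : GroupoidAction Γ C) {x : C} (α : x ⟶ x) : QHom A x x :=
  ⟨1, eqToHom (by rw [A.act_one]; rfl) ≫ α⟩

/-- The section of `Q(Π,Γ,x) → Γ` associated to a `Γ`-fixed object `y` and an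
isomorphism `φ : x ⟶ y`, namely `σ ↦ (σ, φ⁻¹ ∘ σ(φ))`. -/
def Qsection (A : GroupoidAction Γ C) {x y : C} (hy : ∀ σ : Γ, (A.act σ).obj y = y)
    (φ : x ⟶ y) (σ : Γ) : QHom A x x :=
  ⟨σ, (A.act σ).map φ ≫ eqToHom (hy σ) ≫ Groupoid.inv φ⟩

/-- For a connected groupoid `Π` with an action of `Γ` and an object `x`,
the projection `Q(Π,Γ,x) → Γ`, `(σ,α) ↦ σ`, is surjective and multiplicative, and its
kernel (the fibre over `1 ∈ Γ`) is identified with `Π(x,x)` via the embedding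
`α ↦ (1,α)`, which is injective, multiplicative and has exactly the fibre over `1` as
its range.  In other words we have a short exact sequence
`1 → Π(x,x) → Q(Π,Γ,x) → Γ → 1`. -/
theorem grothendieck_exact_sequence (A : GroupoidAction Γ C)
    (hconn : ∀ x y : C, Nonempty (x ⟶ y)) (x : C) :
    -- the projection is surjective
    (∀ σ : Γ, ∃ f : QHom A x x, f.1 = σ) ∧
    -- the projection is a homomorphism of groups
    (∀ f g : QHom A x x, (Qcomp f g).1 = f.1 * g.1) ∧
    -- the embedding of Π(x,x) is an injective homomorphism
    Function.Injective (fun α : x ⟶ x => Qof A α) ∧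
    (∀ α β : x ⟶ x, Qcomp (Qof A α) (Qof A β) = Qof A (β ≫ α)) ∧
    (Qof A (𝟙 x) = Qid A x) ∧
    -- its range is exactly the kernel of the projection
    (Set.range (fun α : x ⟶ x => Qof A α) = {f : QHom A x x | f.1 = 1}) := by

  refine ⟨?_, ?_, ?_, ?_, ?_, ?_⟩
  · intro σ
    obtain ⟨α⟩ := hconn ((A.act σ).obj x) x
    exact ⟨⟨σ, α⟩, rfl⟩
  · intro f g; rfl
  · intro α β h
    injection h with h1 h2
    exact (cancel_epi _).mp h2
  · intro α β
    refine Sigma.ext (one_mul 1) ?_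
    show HEq (Qcomp (Qof A α) (Qof A β)).2 (Qof A (β ≫ α)).2
    rw [← conj_eqToHom_iff_heq _ _ (by simp [Qcomp, Qof]) rfl]
    have hm := Functor.congr_hom A.act_one β
    simp [Qcomp, Qof, hm, eqToHom_map, eqToHom_trans]
    erw [eqToHom_trans_assoc]
  · simp [Qof, Qid]; rfl
  · ext f
    simp only [Set.mem_range, Set.mem_setOf_eq]
    constructor
    · rintro ⟨α, rfl⟩; rfl
    · intro h
      obtain ⟨σ, β⟩ := f
      have h' : x = (A.act σ).obj x := by simp only at h; rw [h, A.act_one]; rfl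
      refine ⟨eqToHom h' ≫ β, ?_⟩
      refine Sigma.ext ((show σ = 1 from h)).symm ?_
      show HEq (Qof A (eqToHom h' ≫ β)).2 β
      simp [Qof]
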